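/- Let n ≥ 3, 1 ≤ q ≤ n-2, l ≥ 2(q+1)+1 an integer, h holomorphic near the closed unit disk, s = |z|², w = t + is, and u_h = h(w) (z^n)^l s^{-(q+1)} ξ^J with J = {1,…,q+1}. Then, with □_b computed componentwise by the Folland–Stein formula □_b(f_{\bar I} d\bar z^I) = -Σ_{k∉I} L_k \bar L_k f_{\bar I} d\bar z^I - Σ_{k∈I} \bar L_k L_k f_{\bar I} d\bar z^I, one has □_b u_h = ((q+1)(n+l-q-1)/s) · u_h on {s > 0}. -/

import Mathlib

open Complex

noncomputable section

/-- The Heisenberg group `ℍⁿ = ℝ_t × ℂⁿ_z` as a manifold. -/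
abbrev Heis (n : ℕ) := ℝ × (Fin n → ℂ)

/-- Directional derivative of `f` at `p` in the (real) direction `v`. -/
def dirDeriv {n : ℕ} (v : Heis n) (f : Heis n → ℂ) (p : Heis n) : ℂ := fderiv ℝ f p v

/-- `∂_t`. -/
def Dt {n : ℕ} (f : Heis n → ℂ) : Heis n → ℂ := dirDeriv (1, 0)  f

/-- `∂_{x^j}` where `z^j = x^j + i y^j`. -/
def Dx {n : ℕ} (j : Fin n) (f : Heis n → ℂ) : Heis n → ℂ := dirDeriv (0, Pi.single j 1) f

/-- `∂_{y^j}`. -/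
def Dy {n : ℕ} (j : Fin n) (f : Heis n → ℂ) : Heis n → ℂ := dirDeriv (0, Pi.single j I) f

/-- The Wirtinger derivative `∂_{z^j} = (∂_{x^j} - i ∂_{y^j})/2`. -/
def Dz {n : ℕ} (j : Fin n) (f : Heis n → ℂ) (p : Heis n) : ℂ := (Dx j f p - I * Dy j f p) / 2

/-- The Wirtinger derivative `∂_{\bar z^j} = (∂_{x^j} + i ∂_{y^j})/2`. -/
def Dzbar {n : ℕ} (j : Fin n) (f : Heis n → ℂ) (p : Heis n) : ℂ := (Dx j f p + I * Dy j f p) / 2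

/-- The CR vector field `L_j = ∂_{z^j} + i \bar z^j ∂_t`. -/
def Lop {n : ℕ} (j : Fin n) (f : Heis n → ℂ) (p : Heis n) : ℂ :=
  Dz j f p + I * (starRingEnd ℂ) (p.2 j) * Dt f p

/-- The conjugate CR vector field `\bar L_j = ∂_{\bar z^j} - i z^j ∂_t`. -/
def Lbar {n : ℕ} (j : Fin n) (f : Heis n → ℂ) (p : Heis n) : ℂ :=
  Dzbar j f p - I * (p.2 j) * Dt f p

/-- `s = |z|²`. -/
def sF {n : ℕ} (p : Heis n) : ℝ := ∑ j, Complex.normSq (p.2 j)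

/-- `w = t + i s`. -/
def wF {n : ℕ} (p : Heis n) : ℂ := (p.1 : ℂ) + I * (sF p : ℂ)

namespace Tool
variable {n : ℕ}

/- ===== dirDeriv toolkit (already tested) ===== -/
lemma dirDeriv_congr {v : Heis n} {f g : Heis n → ℂ} {p : Heis n}
    (hfg : f =ᶠ[nhds p] g) : dirDeriv v f p = dirDeriv v g p := by
  unfold dirDeriv; rw [hfg.fderiv_eq]

lemma dirDeriv_add {v : Heis n} {f g : Heis n → ℂ} {p : Heis n}
    (hf : DifferentiableAt ℝ f p) (hg : DifferentiableAt ℝ g p) :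
    dirDeriv v (fun x => f x + g x) p = dirDeriv v f p + dirDeriv v g p := by
  unfold dirDeriv; rw [fderiv_fun_add hf hg]; simp

lemma dirDeriv_mul {v : Heis n} {f g : Heis n → ℂ} {p : Heis n}
    (hf : DifferentiableAt ℝ f p) (hg : DifferentiableAt ℝ g p) :
    dirDeriv v (fun x => f x * g x) p = dirDeriv v f p * g p + f p * dirDeriv v g p := by
  unfold dirDeriv; rw [fderiv_fun_mul hf hg]; simp; ring

lemma dirDeriv_comp {v : Heis n} {g : ℂ → ℂ} {u : Heis n → ℂ} {p : Heis n}
    (hg : DifferentiableAt ℂ g (u p)) (hu : DifferentiableAt ℝ u p) :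
    dirDeriv v (fun x => g (u x)) p = deriv g (u p) * dirDeriv v u p := by
  have h1 : HasFDerivAt g
      ((ContinuousLinearMap.smulRight (1 : ℂ →L[ℂ] ℂ) (deriv g (u p))).restrictScalars ℝ) (u p) :=
    (hg.hasDerivAt.hasFDerivAt).restrictScalars ℝ
  have h3 := h1.comp p hu.hasFDerivAt
  unfold dirDeriv
  have h4 : (fun x => g (u x)) = g ∘ u := rfl
  rw [h4, h3.fderiv]
  simp [mul_comm]

lemma dirDeriv_zpow {v : Heis n} {u : Heis n → ℂ} {p : Heis n} (e : ℤ)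
    (hu : DifferentiableAt ℝ u p) (h0 : u p ≠ 0) :
    dirDeriv v (fun x => u x ^ e) p = e * u p ^ (e - 1) * dirDeriv v u p := by
  have hg : DifferentiableAt ℂ (fun z : ℂ => z ^ e) (u p) :=
    (hasDerivAt_zpow e (u p) (Or.inl h0)).differentiableAt
  rw [dirDeriv_comp hg hu, (hasDerivAt_zpow e (u p) (Or.inl h0)).deriv]

lemma dirDeriv_pow {v : Heis n} {u : Heis n → ℂ} {p : Heis n} (e : ℕ)
    (hu : DifferentiableAt ℝ u p) :
    dirDeriv v (fun x => u x ^ e) p = e * u p ^ (e - 1) * dirDeriv v u p := by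
  have hg : DifferentiableAt ℂ (fun z : ℂ => z ^ e) (u p) :=
    (hasDerivAt_pow e (u p)).differentiableAt
  rw [dirDeriv_comp hg hu, (hasDerivAt_pow e (u p)).deriv]

lemma dirDeriv_fst (v : Heis n) (p : Heis n) :
    dirDeriv v (fun x : Heis n => (x.1 : ℂ)) p = (v.1 : ℂ) := by
  have h4 : (fun x : Heis n => (x.1 : ℂ))
      = ⇑(Complex.ofRealCLM.comp (ContinuousLinearMap.fst ℝ ℝ (Fin n → ℂ))) := rfl
  unfold dirDeriv
  rw [h4, ContinuousLinearMap.fderiv]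
  simp

lemma dirDeriv_coord (v : Heis n) (j : Fin n) (p : Heis n) :
    dirDeriv v (fun x : Heis n => x.2 j) p = v.2 j := by
  have h4 : (fun x : Heis n => x.2 j)
      = ⇑((ContinuousLinearMap.proj j (R := ℝ) (φ := fun _ : Fin n => ℂ)).comp
          (ContinuousLinearMap.snd ℝ ℝ (Fin n → ℂ))) := rfl
  unfold dirDeriv
  rw [h4, ContinuousLinearMap.fderiv]
  simp

lemma dirDeriv_coord_conj (v : Heis n) (j : Fin n) (p : Heis n) :
    dirDeriv v (fun x : Heis n => (starRingEnd ℂ) (x.2 j)) p = (starRingEnd ℂ) (v.2 j) := by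
  have h4 : (fun x : Heis n => (starRingEnd ℂ) (x.2 j))
      = ⇑((Complex.conjCLE.toContinuousLinearMap).comp
          ((ContinuousLinearMap.proj j (R := ℝ) (φ := fun _ : Fin n => ℂ)).comp
          (ContinuousLinearMap.snd ℝ ℝ (Fin n → ℂ)))) := rfl
  unfold dirDeriv
  rw [h4, ContinuousLinearMap.fderiv]
  simp

lemma dirDeriv_prod {v : Heis n} {ι : Type*} [DecidableEq ι] (u : Finset ι)
    (g : ι → Heis n → ℂ) (p : Heis n) (hg : ∀ i ∈ u, DifferentiableAt ℝ (g i) p) :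
    dirDeriv v (fun x => ∏ i ∈ u, g i x) p
      = ∑ i ∈ u, (∏ j ∈ u.erase i, g j p) * dirDeriv v (g i) p := by
  unfold dirDeriv
  rw [fderiv_finset_prod hg]
  simp

/- ===== basic functions ===== -/
def Sc (x : Heis n) : ℂ := ∑ j, x.2 j * (starRingEnd ℂ) (x.2 j)
def Wc (x : Heis n) : ℂ := (x.1 : ℂ) + I * Sc x
def Pz (b : Fin n → ℕ) (x : Heis n) : ℂ := ∏ j, (x.2 j) ^ (b j)
def Qz (c : Fin n → ℕ) (x : Heis n) : ℂ := ∏ j, ((starRingEnd ℂ) (x.2 j)) ^ (c j)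
def Gm (g : ℂ → ℂ) (e : ℤ) (b c : Fin n → ℕ) (x : Heis n) : ℂ :=
  g (Wc x) * Sc x ^ e * Pz b x * Qz c x

lemma Sc_eq (x : Heis n) : Sc x = ((sF x : ℝ) : ℂ) := by
  unfold Sc sF
  push_cast
  exact Finset.sum_congr rfl fun j _ => (Complex.mul_conj _)

lemma Wc_eq (x : Heis n) : Wc x = wF x := by
  unfold Wc wF; rw [Sc_eq]

/- differentiability -/
lemma diff_fst : Differentiable ℝ (fun x : Heis n => (x.1 : ℂ)) :=
  (Complex.ofRealCLM.comp (ContinuousLinearMap.fst ℝ ℝ (Fin n → ℂ))).differentiable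

lemma diff_coord (j : Fin n) : Differentiable ℝ (fun x : Heis n => x.2 j) :=
  ((ContinuousLinearMap.proj j (R := ℝ) (φ := fun _ : Fin n => ℂ)).comp
    (ContinuousLinearMap.snd ℝ ℝ (Fin n → ℂ))).differentiable

lemma diff_coord_conj (j : Fin n) :
    Differentiable ℝ (fun x : Heis n => (starRingEnd ℂ) (x.2 j)) :=
  ((Complex.conjCLE.toContinuousLinearMap).comp
    ((ContinuousLinearMap.proj j (R := ℝ) (φ := fun _ : Fin n => ℂ)).comp
      (ContinuousLinearMap.snd ℝ ℝ (Fin n → ℂ)))).differentiable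

lemma diff_Sc : Differentiable ℝ (Sc (n := n)) := by
  apply Differentiable.fun_sum
  intro j _
  exact (diff_coord j).mul (diff_coord_conj j)

lemma diff_Wc : Differentiable ℝ (Wc (n := n)) :=
  diff_fst.add (diff_Sc.const_mul I)

lemma diff_Pz (b : Fin n → ℕ) : Differentiable ℝ (Pz b) := by
  intro x
  exact (HasFDerivAt.finset_prod (u := Finset.univ)
    (g := fun j (y : Heis n) => (y.2 j) ^ (b j))
    (fun j _ => ((diff_coord j x).pow (b j)).hasFDerivAt)).differentiableAt

lemma diff_Qz (c : Fin n → ℕ) : Differentiable ℝ (Qz c) := by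
  intro x
  exact (HasFDerivAt.finset_prod (u := Finset.univ)
    (g := fun j (y : Heis n) => ((starRingEnd ℂ) (y.2 j)) ^ (c j))
    (fun j _ => ((diff_coord_conj j x).pow (c j)).hasFDerivAt)).differentiableAt

lemma diff_comp_Wc {g : ℂ → ℂ} (hg : Differentiable ℂ g) :
    Differentiable ℝ (fun x : Heis n => g (Wc x)) := fun x =>
  ((hg (Wc x)).restrictScalars ℝ).comp x (diff_Wc x)

lemma diffAt_Sc_zpow (e : ℤ) {x : Heis n} (hx : Sc x ≠ 0) :
    DifferentiableAt ℝ (fun y : Heis n => Sc y ^ e) x :=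
  (((differentiableAt_zpow.mpr (Or.inl hx)).restrictScalars ℝ).comp x (diff_Sc x) : _)

lemma diffAt_Gm {g : ℂ → ℂ} (hg : Differentiable ℂ g) (e : ℤ) (b c : Fin n → ℕ)
    {x : Heis n} (hx : Sc x ≠ 0) : DifferentiableAt ℝ (Gm g e b c) x :=
  (((diff_comp_Wc hg x).mul (diffAt_Sc_zpow e hx)).mul (diff_Pz b x)).mul (diff_Qz c x)


end Tool

namespace Tool
variable {n : ℕ}
/- ============ NEW PART ============ -/

lemma dirDeriv_sum {v : Heis n} {ι : Type*} (u : Finset ι)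
    (g : ι → Heis n → ℂ) (p : Heis n) (hg : ∀ i ∈ u, DifferentiableAt ℝ (g i) p) :
    dirDeriv v (fun x => ∑ i ∈ u, g i x) p = ∑ i ∈ u, dirDeriv v (g i) p := by
  unfold dirDeriv
  rw [fderiv_fun_sum hg]
  simp

lemma dirDeriv_Sc (v : Heis n) (x : Heis n) :
    dirDeriv v Sc x = ∑ j, (v.2 j * (starRingEnd ℂ) (x.2 j) + x.2 j * (starRingEnd ℂ) (v.2 j)) := by
  unfold Sc
  rw [dirDeriv_sum Finset.univ _ x (fun j _ => ((diff_coord j) x).fun_mul ((diff_coord_conj j) x))]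
  refine Finset.sum_congr rfl fun j _ => ?_
  rw [dirDeriv_mul ((diff_coord j) x) ((diff_coord_conj j) x), dirDeriv_coord,
    dirDeriv_coord_conj]

lemma dirDeriv_Wc (v : Heis n) (x : Heis n) :
    dirDeriv v Wc x = (v.1 : ℂ) + I * dirDeriv v Sc x := by
  unfold Wc
  rw [dirDeriv_add (diff_fst x) ((diff_Sc x).const_mul I)]
  congr 1
  · exact dirDeriv_fst v x
  · rw [show (fun x : Heis n => I * Sc x) = (fun x : Heis n => (fun _ => I) x * Sc x) from rfl,
      dirDeriv_mul (differentiableAt_const I) (diff_Sc x)]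
    simp [dirDeriv, fderiv_const]

/- operator values on basic functions -/
lemma Lop_Sc (m : Fin n) (x : Heis n) : Lop m Sc x = (starRingEnd ℂ) (x.2 m) := by
  unfold Lop Dz Dx Dy Dt
  rw [dirDeriv_Sc, dirDeriv_Sc, dirDeriv_Sc]
  simp [Pi.single_apply, apply_ite (starRingEnd ℂ), Finset.sum_add_distrib,
    Finset.sum_ite_eq', mul_ite]
  ring_nf
  try simp only [Complex.I_sq, show (I:ℂ)^3 = -I from by rw [pow_succ, Complex.I_sq]; ring]
  try ring

lemma Lbar_Sc (m : Fin n) (x : Heis n) : Lbar m Sc x = x.2 m := by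
  unfold Lbar Dzbar Dx Dy Dt
  rw [dirDeriv_Sc, dirDeriv_Sc, dirDeriv_Sc]
  simp [Pi.single_apply, apply_ite (starRingEnd ℂ), Finset.sum_add_distrib,
    Finset.sum_ite_eq', mul_ite]
  ring_nf
  try simp only [Complex.I_sq, show (I:ℂ)^3 = -I from by rw [pow_succ, Complex.I_sq]; ring]
  try ring

lemma Lop_Wc (m : Fin n) (x : Heis n) : Lop m Wc x = 2 * I * (starRingEnd ℂ) (x.2 m) := by
  unfold Lop Dz Dx Dy Dt
  rw [dirDeriv_Wc, dirDeriv_Wc, dirDeriv_Wc, dirDeriv_Sc, dirDeriv_Sc, dirDeriv_Sc]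
  simp [Pi.single_apply, apply_ite (starRingEnd ℂ), Finset.sum_add_distrib,
    Finset.sum_ite_eq', mul_ite]
  ring_nf
  try simp only [Complex.I_sq, show (I:ℂ)^3 = -I from by rw [pow_succ, Complex.I_sq]; ring]
  try ring

lemma Lbar_Wc (m : Fin n) (x : Heis n) : Lbar m Wc x = 0 := by
  unfold Lbar Dzbar Dx Dy Dt
  rw [dirDeriv_Wc, dirDeriv_Wc, dirDeriv_Wc, dirDeriv_Sc, dirDeriv_Sc, dirDeriv_Sc]
  simp [Pi.single_apply, apply_ite (starRingEnd ℂ), Finset.sum_add_distrib,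
    Finset.sum_ite_eq', mul_ite]
  ring_nf
  try simp only [Complex.I_sq, show (I:ℂ)^3 = -I from by rw [pow_succ, Complex.I_sq]; ring]
  try ring


/- ===== chunk 4 ===== -/

lemma Lop_congr {m : Fin n} {f g : Heis n → ℂ} {p : Heis n}
    (hfg : f =ᶠ[nhds p] g) : Lop m f p = Lop m g p := by
  unfold Lop Dz Dx Dy Dt
  rw [dirDeriv_congr hfg, dirDeriv_congr hfg, dirDeriv_congr hfg]

lemma Lbar_congr {m : Fin n} {f g : Heis n → ℂ} {p : Heis n}
    (hfg : f =ᶠ[nhds p] g) : Lbar m f p = Lbar m g p := by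
  unfold Lbar Dzbar Dx Dy Dt
  rw [dirDeriv_congr hfg, dirDeriv_congr hfg, dirDeriv_congr hfg]

lemma Lop_add {m : Fin n} {f g : Heis n → ℂ} {p : Heis n}
    (hf : DifferentiableAt ℝ f p) (hg : DifferentiableAt ℝ g p) :
    Lop m (fun x => f x + g x) p = Lop m f p + Lop m g p := by
  unfold Lop Dz Dx Dy Dt
  rw [dirDeriv_add hf hg, dirDeriv_add hf hg, dirDeriv_add hf hg]
  ring

lemma Lbar_add {m : Fin n} {f g : Heis n → ℂ} {p : Heis n}
    (hf : DifferentiableAt ℝ f p) (hg : DifferentiableAt ℝ g p) :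
    Lbar m (fun x => f x + g x) p = Lbar m f p + Lbar m g p := by
  unfold Lbar Dzbar Dx Dy Dt
  rw [dirDeriv_add hf hg, dirDeriv_add hf hg, dirDeriv_add hf hg]
  ring

lemma Lop_mul {m : Fin n} {f g : Heis n → ℂ} {p : Heis n}
    (hf : DifferentiableAt ℝ f p) (hg : DifferentiableAt ℝ g p) :
    Lop m (fun x => f x * g x) p = Lop m f p * g p + f p * Lop m g p := by
  unfold Lop Dz Dx Dy Dt
  rw [dirDeriv_mul hf hg, dirDeriv_mul hf hg, dirDeriv_mul hf hg]
  ring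

lemma Lbar_mul {m : Fin n} {f g : Heis n → ℂ} {p : Heis n}
    (hf : DifferentiableAt ℝ f p) (hg : DifferentiableAt ℝ g p) :
    Lbar m (fun x => f x * g x) p = Lbar m f p * g p + f p * Lbar m g p := by
  unfold Lbar Dzbar Dx Dy Dt
  rw [dirDeriv_mul hf hg, dirDeriv_mul hf hg, dirDeriv_mul hf hg]
  ring

lemma Lop_const_mul {m : Fin n} {f : Heis n → ℂ} {p : Heis n} (A : ℂ)
    (hf : DifferentiableAt ℝ f p) :
    Lop m (fun x => A * f x) p = A * Lop m f p := by
  rw [show (fun x => A * f x) = (fun x => (fun _ : Heis n => A) x * f x) from rfl,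
    Lop_mul (differentiableAt_const A) hf]
  have hz : Lop m (fun _ : Heis n => A) p = 0 := by
    unfold Lop Dz Dx Dy Dt dirDeriv
    simp
  rw [hz]; ring

lemma Lbar_const_mul {m : Fin n} {f : Heis n → ℂ} {p : Heis n} (A : ℂ)
    (hf : DifferentiableAt ℝ f p) :
    Lbar m (fun x => A * f x) p = A * Lbar m f p := by
  rw [show (fun x => A * f x) = (fun x => (fun _ : Heis n => A) x * f x) from rfl,
    Lbar_mul (differentiableAt_const A) hf]
  have hz : Lbar m (fun _ : Heis n => A) p = 0 := by
    unfold Lbar Dzbar Dx Dy Dt dirDeriv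
    simp
  rw [hz]; ring

lemma Lop_comp {m : Fin n} {g : ℂ → ℂ} {u : Heis n → ℂ} {p : Heis n}
    (hg : DifferentiableAt ℂ g (u p)) (hu : DifferentiableAt ℝ u p) :
    Lop m (fun x => g (u x)) p = deriv g (u p) * Lop m u p := by
  unfold Lop Dz Dx Dy Dt
  rw [dirDeriv_comp hg hu, dirDeriv_comp hg hu, dirDeriv_comp hg hu]
  ring

lemma Lbar_comp {m : Fin n} {g : ℂ → ℂ} {u : Heis n → ℂ} {p : Heis n}
    (hg : DifferentiableAt ℂ g (u p)) (hu : DifferentiableAt ℝ u p) :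
    Lbar m (fun x => g (u x)) p = deriv g (u p) * Lbar m u p := by
  unfold Lbar Dzbar Dx Dy Dt
  rw [dirDeriv_comp hg hu, dirDeriv_comp hg hu, dirDeriv_comp hg hu]
  ring

lemma Lop_zpow {m : Fin n} {u : Heis n → ℂ} {p : Heis n} (e : ℤ)
    (hu : DifferentiableAt ℝ u p) (h0 : u p ≠ 0) :
    Lop m (fun x => u x ^ e) p = e * u p ^ (e - 1) * Lop m u p := by
  unfold Lop Dz Dx Dy Dt
  rw [dirDeriv_zpow e hu h0, dirDeriv_zpow e hu h0, dirDeriv_zpow e hu h0]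
  ring

lemma Lbar_zpow {m : Fin n} {u : Heis n → ℂ} {p : Heis n} (e : ℤ)
    (hu : DifferentiableAt ℝ u p) (h0 : u p ≠ 0) :
    Lbar m (fun x => u x ^ e) p = e * u p ^ (e - 1) * Lbar m u p := by
  unfold Lbar Dzbar Dx Dy Dt
  rw [dirDeriv_zpow e hu h0, dirDeriv_zpow e hu h0, dirDeriv_zpow e hu h0]
  ring

/- product splitting -/
lemma Pz_split (b : Fin n → ℕ) (m : Fin n) (x : Heis n) :
    Pz b x = (x.2 m) ^ (b m) * ∏ j ∈ Finset.univ.erase m, (x.2 j) ^ (b j) := by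
  unfold Pz
  rw [← Finset.mul_prod_erase Finset.univ _ (Finset.mem_univ m)]

lemma Qz_split (c : Fin n → ℕ) (m : Fin n) (x : Heis n) :
    Qz c x = ((starRingEnd ℂ) (x.2 m)) ^ (c m)
      * ∏ j ∈ Finset.univ.erase m, ((starRingEnd ℂ) (x.2 j)) ^ (c j) := by
  unfold Qz
  rw [← Finset.mul_prod_erase Finset.univ _ (Finset.mem_univ m)]

lemma Pz_update (b : Fin n → ℕ) (m : Fin n) (v : ℕ) (x : Heis n) :
    Pz (Function.update b m v) x
      = (x.2 m) ^ v * ∏ j ∈ Finset.univ.erase m, (x.2 j) ^ (b j) := by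
  rw [Pz_split (Function.update b m v) m x, Function.update_self]
  congr 1
  exact Finset.prod_congr rfl fun j hj => by
    rw [Function.update_of_ne (Finset.ne_of_mem_erase hj)]

lemma Qz_update (c : Fin n → ℕ) (m : Fin n) (v : ℕ) (x : Heis n) :
    Qz (Function.update c m v) x
      = ((starRingEnd ℂ) (x.2 m)) ^ v
        * ∏ j ∈ Finset.univ.erase m, ((starRingEnd ℂ) (x.2 j)) ^ (c j) := by
  rw [Qz_split (Function.update c m v) m x, Function.update_self]
  congr 1
  exact Finset.prod_congr rfl fun j hj => by
    rw [Function.update_of_ne (Finset.ne_of_mem_erase hj)]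

/- operator values on Pz, Qz -/
lemma dirDeriv_Pz (v : Heis n) (b : Fin n → ℕ) (x : Heis n) :
    dirDeriv v (Pz b) x
      = ∑ j, (∏ i ∈ Finset.univ.erase j, (x.2 i) ^ (b i))
          * ((b j : ℂ) * (x.2 j) ^ (b j - 1) * v.2 j) := by
  unfold Pz
  rw [dirDeriv_prod Finset.univ _ x (fun j _ => ((diff_coord j) x).fun_pow (b j))]
  refine Finset.sum_congr rfl fun j _ => ?_
  rw [dirDeriv_pow (b j) ((diff_coord j) x), dirDeriv_coord]

lemma dirDeriv_Qz (v : Heis n) (c : Fin n → ℕ) (x : Heis n) :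
    dirDeriv v (Qz c) x
      = ∑ j, (∏ i ∈ Finset.univ.erase j, ((starRingEnd ℂ) (x.2 i)) ^ (c i))
          * ((c j : ℂ) * ((starRingEnd ℂ) (x.2 j)) ^ (c j - 1) * (starRingEnd ℂ) (v.2 j)) := by
  unfold Qz
  rw [dirDeriv_prod Finset.univ _ x (fun j _ => ((diff_coord_conj j) x).fun_pow (c j))]
  refine Finset.sum_congr rfl fun j _ => ?_
  rw [dirDeriv_pow (c j) ((diff_coord_conj j) x), dirDeriv_coord_conj]

lemma Lop_Pz (m : Fin n) (b : Fin n → ℕ) (x : Heis n) :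
    Lop m (Pz b) x
      = (b m : ℂ) * (x.2 m) ^ (b m - 1) * ∏ i ∈ Finset.univ.erase m, (x.2 i) ^ (b i) := by
  unfold Lop Dz Dx Dy Dt
  rw [dirDeriv_Pz, dirDeriv_Pz, dirDeriv_Pz]
  simp [Pi.single_apply, mul_ite, Finset.sum_ite_eq']
  linear_combination (-((∏ i ∈ Finset.univ.erase m, x.2 i ^ b i) * ((b m : ℂ) * x.2 m ^ (b m - 1)))/2) * Complex.I_mul_I

lemma Lbar_Pz (m : Fin n) (b : Fin n → ℕ) (x : Heis n) :
    Lbar m (Pz b) x = 0 := by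
  unfold Lbar Dzbar Dx Dy Dt
  rw [dirDeriv_Pz, dirDeriv_Pz, dirDeriv_Pz]
  simp [Pi.single_apply, mul_ite, Finset.sum_ite_eq']
  linear_combination ((∏ i ∈ Finset.univ.erase m, x.2 i ^ b i) * ((b m : ℂ) * x.2 m ^ (b m - 1))) * Complex.I_mul_I

lemma Lop_Qz (m : Fin n) (c : Fin n → ℕ) (x : Heis n) :
    Lop m (Qz c) x = 0 := by
  unfold Lop Dz Dx Dy Dt
  rw [dirDeriv_Qz, dirDeriv_Qz, dirDeriv_Qz]
  simp [Pi.single_apply, apply_ite (starRingEnd ℂ), mul_ite, Finset.sum_ite_eq']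
  linear_combination ((∏ i ∈ Finset.univ.erase m, (starRingEnd ℂ) (x.2 i) ^ c i) * ((c m : ℂ) * (starRingEnd ℂ) (x.2 m) ^ (c m - 1))) * Complex.I_mul_I

lemma Lbar_Qz (m : Fin n) (c : Fin n → ℕ) (x : Heis n) :
    Lbar m (Qz c) x
      = (c m : ℂ) * ((starRingEnd ℂ) (x.2 m)) ^ (c m - 1)
        * ∏ i ∈ Finset.univ.erase m, ((starRingEnd ℂ) (x.2 i)) ^ (c i) := by
  unfold Lbar Dzbar Dx Dy Dt
  rw [dirDeriv_Qz, dirDeriv_Qz, dirDeriv_Qz]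
  simp [Pi.single_apply, apply_ite (starRingEnd ℂ), mul_ite, Finset.sum_ite_eq']
  linear_combination (-((∏ i ∈ Finset.univ.erase m, (starRingEnd ℂ) (x.2 i) ^ c i) * ((c m : ℂ) * (starRingEnd ℂ) (x.2 m) ^ (c m - 1)))/2) * Complex.I_mul_I


/- ===== chunk 5: master lemmas ===== -/

lemma Lop_Gm {g : ℂ → ℂ} (hg : Differentiable ℂ g) (e : ℤ) (b c : Fin n → ℕ) (m : Fin n)
    {x : Heis n} (hx : Sc x ≠ 0) :
    Lop m (Gm g e b c) x
      = 2 * I * (starRingEnd ℂ) (x.2 m) * Gm (deriv g) e b c x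
        + (e : ℂ) * (starRingEnd ℂ) (x.2 m) * Gm g (e-1) b c x
        + (b m : ℂ) * Gm g e (Function.update b m (b m - 1)) c x := by
  have d1 : DifferentiableAt ℝ (fun y : Heis n => g (Wc y)) x := diff_comp_Wc hg x
  have d2 := diffAt_Sc_zpow (n := n) e (x := x) hx
  have d3 := diff_Pz (n := n) b x
  have d4 := diff_Qz (n := n) c x
  have e1 : Gm g e b c
      = fun y => (((fun y' => g (Wc y')) y * (fun y' : Heis n => Sc y' ^ e) y) * Pz b y)
          * Qz c y := rfl
  rw [e1, Lop_mul ((d1.fun_mul d2).fun_mul d3) d4, Lop_mul (d1.fun_mul d2) d3, Lop_mul d1 d2,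
    Lop_comp (hg (Wc x)) (diff_Wc x), Lop_zpow e (diff_Sc x) hx, Lop_Wc, Lop_Pz, Lop_Qz, Lop_Sc]
  unfold Gm
  rw [Pz_update, Pz_split b m x]
  ring

lemma Lbar_Gm {g : ℂ → ℂ} (hg : Differentiable ℂ g) (e : ℤ) (b c : Fin n → ℕ) (m : Fin n)
    {x : Heis n} (hx : Sc x ≠ 0) :
    Lbar m (Gm g e b c) x
      = (e : ℂ) * x.2 m * Gm g (e-1) b c x
        + (c m : ℂ) * Gm g e b (Function.update c m (c m - 1)) x := by
  have d1 : DifferentiableAt ℝ (fun y : Heis n => g (Wc y)) x := diff_comp_Wc hg x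
  have d2 := diffAt_Sc_zpow (n := n) e (x := x) hx
  have d3 := diff_Pz (n := n) b x
  have d4 := diff_Qz (n := n) c x
  have e1 : Gm g e b c
      = fun y => (((fun y' => g (Wc y')) y * (fun y' : Heis n => Sc y' ^ e) y) * Pz b y)
          * Qz c y := rfl
  rw [e1, Lbar_mul ((d1.fun_mul d2).fun_mul d3) d4, Lbar_mul (d1.fun_mul d2) d3, Lbar_mul d1 d2,
    Lbar_comp (hg (Wc x)) (diff_Wc x), Lbar_zpow e (diff_Sc x) hx, Lbar_Wc, Lbar_Pz, Lbar_Qz, Lbar_Sc]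
  unfold Gm
  rw [Qz_update, Qz_split c m x]
  ring

lemma Gm_inc_b (g : ℂ → ℂ) (e : ℤ) (b c : Fin n → ℕ) (m : Fin n) (x : Heis n) :
    Gm g e (Function.update b m (b m + 1)) c x = x.2 m * Gm g e b c x := by
  unfold Gm
  rw [Pz_update, Pz_split b m x]
  ring

lemma Gm_inc_c (g : ℂ → ℂ) (e : ℤ) (b c : Fin n → ℕ) (m : Fin n) (x : Heis n) :
    Gm g e b (Function.update c m (c m + 1)) x = (starRingEnd ℂ) (x.2 m) * Gm g e b c x := by
  unfold Gm
  rw [Qz_update, Qz_split c m x]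
  ring

lemma Gm_succ (g : ℂ → ℂ) (e : ℤ) (b c : Fin n → ℕ) {x : Heis n} (hx : Sc x ≠ 0) :
    Sc x * Gm g (e - 1) b c x = Gm g e b c x := by
  unfold Gm
  have h2 : Sc x ^ e = Sc x ^ (e - 1) * Sc x := by
    rw [← zpow_add_one₀ hx]
    norm_num
  rw [h2]
  ring

lemma Pz_single (ν : Fin n) (l : ℕ) (x : Heis n) :
    Pz (Pi.single ν l) x = (x.2 ν) ^ l := by
  unfold Pz
  rw [show (fun j => x.2 j ^ (Pi.single ν l j)) = fun j => if j = ν then x.2 ν ^ l else 1 from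
    funext fun j => by rcases eq_or_ne j ν with h | h <;> simp [h, Pi.single_apply]]
  simp [Finset.prod_ite_eq']

lemma Qz_single (k : Fin n) (c : ℕ) (x : Heis n) :
    Qz (Pi.single k c) x = ((starRingEnd ℂ) (x.2 k)) ^ c := by
  unfold Qz
  rw [show (fun j => ((starRingEnd ℂ) (x.2 j)) ^ (Pi.single k c j))
      = fun j => if j = k then ((starRingEnd ℂ) (x.2 k)) ^ c else 1 from
    funext fun j => by rcases eq_or_ne j k with h | h <;> simp [h, Pi.single_apply]]
  simp [Finset.prod_ite_eq']


/- ===== chunk 6: update helpers and key lemmas ===== -/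

lemma Gm_dec_c {c : Fin n → ℕ} {m : Fin n} (hc : c m = 1) (g : ℂ → ℂ) (e : ℤ)
    (b : Fin n → ℕ) (x : Heis n) :
    (starRingEnd ℂ) (x.2 m) * Gm g e b (Function.update c m 0) x = Gm g e b c x := by
  have h2 := Gm_inc_c g e b (Function.update c m 0) m x
  rw [Function.update_self, Function.update_idem] at h2
  rw [show Function.update c m (0 + 1) = c from by
    rw [show 0 + 1 = c m from by omega]; exact Function.update_eq_self m c] at h2
  exact h2.symm

lemma key1 {g : ℂ → ℂ} (hg : Differentiable ℂ g) (hg' : Differentiable ℂ (deriv g))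
    (a : ℤ) (ν k m : Fin n) (hkν : k ≠ ν) (l : ℕ)
    {p : Heis n} (hp : Sc p ≠ 0) :
    Lop m (Lbar m (Gm g a (Pi.single ν l) (Pi.single k 1))) p
      = (a : ℂ) * (2*I*(p.2 m * (starRingEnd ℂ) (p.2 m))
            * Gm (deriv g) (a-1) (Pi.single ν l) (Pi.single k 1) p
          + ((a:ℂ)-1) * (p.2 m * (starRingEnd ℂ) (p.2 m))
            * Gm g (a-1-1) (Pi.single ν l) (Pi.single k 1) p
          + ((((Pi.single ν l : Fin n → ℕ) m) : ℂ) + 1) * Gm g (a-1) (Pi.single ν l) (Pi.single k 1) p)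
        + (if m = k then (1:ℂ) else 0) * (2*I*Gm (deriv g) a (Pi.single ν l) (Pi.single k 1) p
            + (a:ℂ) * Gm g (a-1) (Pi.single ν l) (Pi.single k 1) p) := by
  have hev : ∀ᶠ x in nhds p, Sc x ≠ 0 :=
    (diff_Sc.continuous.continuousAt).eventually_ne hp
  have hLbar : Lbar m (Gm g a (Pi.single ν l) (Pi.single k 1))
      =ᶠ[nhds p] (fun x =>
        (a:ℂ) * Gm g (a-1) (Function.update (Pi.single ν l) m ((Pi.single ν l : Fin n → ℕ) m + 1))
            (Pi.single k 1) x
        + (((Pi.single k 1 : Fin n → ℕ) m : ℕ) : ℂ)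
            * Gm g a (Pi.single ν l) (Function.update (Pi.single k 1) m ((Pi.single k 1 : Fin n → ℕ) m - 1)) x) := by
    filter_upwards [hev] with x hx
    rw [Lbar_Gm hg a _ _ m hx, Gm_inc_b]
    ring
  rw [Lop_congr hLbar]
  have dA : DifferentiableAt ℝ (fun x : Heis n =>
      (a:ℂ) * Gm g (a-1) (Function.update (Pi.single ν l) m ((Pi.single ν l : Fin n → ℕ) m + 1))
        (Pi.single k 1) x) p := (diffAt_Gm hg _ _ _ hp).const_mul _
  have dB : DifferentiableAt ℝ (fun x : Heis n =>
      (((Pi.single k 1 : Fin n → ℕ) m : ℕ) : ℂ)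
        * Gm g a (Pi.single ν l) (Function.update (Pi.single k 1) m ((Pi.single k 1 : Fin n → ℕ) m - 1)) x) p :=
    (diffAt_Gm hg _ _ _ hp).const_mul _
  rw [Lop_add dA dB, Lop_const_mul _ (diffAt_Gm hg _ _ _ hp),
    Lop_const_mul _ (diffAt_Gm hg _ _ _ hp),
    Lop_Gm hg _ _ _ m hp, Lop_Gm hg _ _ _ m hp]
  by_cases hmk : m = k
  · have hmv : m ≠ ν := hmk ▸ hkν
    have hz : (Pi.single ν l : Fin n → ℕ) m = 0 := by rw [Pi.single_eq_of_ne hmv]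
    have hck : (Pi.single k 1 : Fin n → ℕ) m = 1 := by rw [hmk]; exact Pi.single_eq_same k 1
    have e1 := Gm_inc_b (deriv g) (a-1) (Pi.single ν l) (Pi.single k 1) m p
    have e2 := Gm_inc_b g (a-1-1) (Pi.single ν l) (Pi.single k 1) m p
    have e3 := Gm_dec_c (c := Pi.single k (1:ℕ)) (m := m) hck (deriv g) a (Pi.single ν l) p
    have e4 := Gm_dec_c (c := Pi.single k (1:ℕ)) (m := m) hck g (a-1) (Pi.single ν l) p
    have hupd0 : Function.update (Pi.single ν l : Fin n → ℕ) m 0 = Pi.single ν l := by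
      rw [← hz]; exact Function.update_eq_self m _
    simp only [hck, hz, Function.update_self, Function.update_idem, Nat.add_sub_cancel,
      Function.update_eq_self, Nat.cast_zero, Nat.cast_one, if_pos hmk, Nat.sub_self,
      hupd0] at e1 e2 e3 e4 ⊢
    push_cast
    linear_combination ((a:ℂ)*2*I*(starRingEnd ℂ) (p.2 m)) * e1
      + ((a:ℂ)*((a:ℂ)-1)*(starRingEnd ℂ) (p.2 m)) * e2 + (2*I) * e3 + (a:ℂ) * e4
  · simp only [Pi.single_eq_of_ne hmk, Function.update_self, Function.update_idem,
      Nat.add_sub_cancel, Function.update_eq_self, Nat.cast_zero, if_neg hmk]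
    have e1 := Gm_inc_b (deriv g) (a-1) (Pi.single ν l) (Pi.single k 1) m p
    have e2 := Gm_inc_b g (a-1-1) (Pi.single ν l) (Pi.single k 1) m p
    push_cast
    linear_combination ((a:ℂ)*2*I*(starRingEnd ℂ) (p.2 m)) * e1
      + ((a:ℂ)*((a:ℂ)-1)*(starRingEnd ℂ) (p.2 m)) * e2


lemma key2 {g : ℂ → ℂ} (hg : Differentiable ℂ g) (hg' : Differentiable ℂ (deriv g))
    (a : ℤ) (ν k m : Fin n) (hmν : m ≠ ν) (hmk : m ≠ k) (l : ℕ)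
    {p : Heis n} (hp : Sc p ≠ 0) :
    Lbar m (Lop m (Gm g a (Pi.single ν l) (Pi.single k 1))) p
      = 2*I*((a:ℂ) * (p.2 m * (starRingEnd ℂ) (p.2 m))
            * Gm (deriv g) (a-1) (Pi.single ν l) (Pi.single k 1) p
          + Gm (deriv g) a (Pi.single ν l) (Pi.single k 1) p)
        + (a:ℂ)*(((a:ℂ)-1) * (p.2 m * (starRingEnd ℂ) (p.2 m))
            * Gm g (a-1-1) (Pi.single ν l) (Pi.single k 1) p
          + Gm g (a-1) (Pi.single ν l) (Pi.single k 1) p) := by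
  have hev : ∀ᶠ x in nhds p, Sc x ≠ 0 :=
    (diff_Sc.continuous.continuousAt).eventually_ne hp
  have hb0 : (Pi.single ν l : Fin n → ℕ) m = 0 := by rw [Pi.single_eq_of_ne hmν]
  have hc0 : (Pi.single k 1 : Fin n → ℕ) m = 0 := by rw [Pi.single_eq_of_ne hmk]
  have hLop : Lop m (Gm g a (Pi.single ν l) (Pi.single k 1))
      =ᶠ[nhds p] (fun x =>
        2*I*Gm (deriv g) a (Pi.single ν l) (Function.update (Pi.single k 1) m 1) x
        + (a:ℂ) * Gm g (a-1) (Pi.single ν l) (Function.update (Pi.single k 1) m 1) x) := by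
    filter_upwards [hev] with x hx
    rw [Lop_Gm hg a _ _ m hx]
    have i1 := Gm_inc_c (deriv g) a (Pi.single ν l) (Pi.single k 1) m x
    have i2 := Gm_inc_c g (a-1) (Pi.single ν l) (Pi.single k 1) m x
    simp only [hc0, hb0, Nat.cast_zero, Nat.zero_add, zero_add] at i1 i2 ⊢
    linear_combination (-2*I) * i1 + (-(a:ℂ)) * i2
  rw [Lbar_congr hLop]
  have dGm1 : DifferentiableAt ℝ
      (Gm (deriv g) a (Pi.single ν l) (Function.update (Pi.single k 1) m 1)) p :=
    diffAt_Gm hg' _ _ _ hp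
  have dGm2 : DifferentiableAt ℝ
      (Gm g (a-1) (Pi.single ν l) (Function.update (Pi.single k 1) m 1)) p :=
    diffAt_Gm hg _ _ _ hp
  rw [Lbar_add (dGm1.const_mul _) (dGm2.const_mul _),
    Lbar_const_mul _ dGm1, Lbar_const_mul _ dGm2,
    Lbar_Gm hg' a _ _ m hp, Lbar_Gm hg (a-1) _ _ m hp]
  have hupd0 : Function.update (Pi.single k 1 : Fin n → ℕ) m 0 = Pi.single k 1 := by
    rw [← hc0]; exact Function.update_eq_self m _
  have j1 := Gm_inc_c (deriv g) (a-1) (Pi.single ν l) (Pi.single k 1) m p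
  have j2 := Gm_inc_c g (a-1-1) (Pi.single ν l) (Pi.single k 1) m p
  simp only [hc0, hb0, Function.update_self, Function.update_idem, Nat.sub_self, hupd0,
    Nat.cast_zero, Nat.cast_one, Nat.zero_add, zero_add] at j1 j2 ⊢
  push_cast
  linear_combination (2*I*(a:ℂ)*(p.2 m)) * j1 + ((a:ℂ)*((a:ℂ)-1)*(p.2 m)) * j2


lemma main (n q l : ℕ) (hq2 : q + 2 ≤ n)
    {g : ℂ → ℂ} (hg : Differentiable ℂ g) (hg' : Differentiable ℂ (deriv g))
    (k : Fin n) (hk : (k : ℕ) < q + 1) (ν : Fin n) (hν : (ν : ℕ) = n - 1)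
    (p : Heis n) (hp : Sc p ≠ 0) :
    (- ∑ m ∈ Finset.univ.filter (fun m : Fin n => ¬ ((m : ℕ) < q + 1 ∧ m ≠ k)),
        Lop m (Lbar m (Gm g (-(q:ℤ)-1) (Pi.single ν l) (Pi.single k 1))) p)
      - ∑ m ∈ Finset.univ.filter (fun m : Fin n => (m : ℕ) < q + 1 ∧ m ≠ k),
        Lbar m (Lop m (Gm g (-(q:ℤ)-1) (Pi.single ν l) (Pi.single k 1))) p
      = (((q:ℂ)+1) * ((n:ℂ)+(l:ℂ)-(q:ℂ)-1) / Sc p)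
          * Gm g (-(q:ℤ)-1) (Pi.single ν l) (Pi.single k 1) p := by
  classical
  have hkν : k ≠ ν := by
    intro he
    rw [he, hν] at hk
    omega
  -- the two index sets
  set J' : Finset (Fin n) := Finset.univ.filter (fun m : Fin n => (m : ℕ) < q + 1 ∧ m ≠ k)
    with hJ'
  set M : Finset (Fin n) :=
    Finset.univ.filter (fun m : Fin n => ¬ ((m : ℕ) < q + 1 ∧ m ≠ k)) with hM
  have hkM : k ∈ M := by simp [hM]
  have hνM : ν ∈ M := by simp [hM, hν]; omega
  have hJcard : J'.card = q := by
    have he : J' = (Finset.univ.filter (fun m : Fin n => (m : ℕ) < q + 1)).erase k := by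
      ext m
      simp [hJ', Finset.mem_erase]
      tauto
    have hf : (Finset.univ.filter (fun m : Fin n => (m : ℕ) < q + 1))
        = Finset.attachFin (Finset.range (q+1)) (fun m hm => by
            simp at hm; omega) := by
      ext m
      simp [Finset.mem_attachFin]
    have hkmem : k ∈ Finset.univ.filter (fun m : Fin n => (m : ℕ) < q + 1) :=
        Finset.mem_filter.mpr ⟨Finset.mem_univ _, hk⟩
    rw [he, Finset.card_erase_of_mem hkmem, hf, Finset.card_attachFin, Finset.card_range]
    omega

  have hMcard : M.card = n - q := by
    have := Finset.card_filter_add_card_filter_not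
      (s := Finset.univ) (p := fun m : Fin n => (m : ℕ) < q + 1 ∧ m ≠ k)
    rw [← hJ', ← hM] at this
    simp only [Finset.card_univ, Fintype.card_fin] at this
    omega
  set a : ℤ := -(q:ℤ) - 1 with haa
  -- abbreviations (as terms)
  have hJmem : ∀ m ∈ J', m ≠ ν ∧ m ≠ k := by
    intro m hm
    have hmm := (Finset.mem_filter.mp hm).2
    refine ⟨?_, hmm.2⟩
    intro he
    have h9 := hmm.1
    rw [he, hν] at h9
    omega
  rw [Finset.sum_congr (rfl : M = M) (fun m _ => key1 hg hg' a ν k m hkν l hp)]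
  rw [Finset.sum_congr (rfl : J' = J')
    (fun m hm => key2 hg hg' a ν k m (hJmem m hm).1 (hJmem m hm).2 l hp)]
  -- split the first sum
  have hsplit1 : ∀ m : Fin n,
      ((a : ℂ) * (2*I*(p.2 m * (starRingEnd ℂ) (p.2 m))
            * Gm (deriv g) (a-1) (Pi.single ν l) (Pi.single k 1) p
          + ((a:ℂ)-1) * (p.2 m * (starRingEnd ℂ) (p.2 m))
            * Gm g (a-1-1) (Pi.single ν l) (Pi.single k 1) p
          + ((((Pi.single ν l : Fin n → ℕ) m) : ℂ) + 1)
            * Gm g (a-1) (Pi.single ν l) (Pi.single k 1) p)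
        + (if m = k then (1:ℂ) else 0)
            * (2*I*Gm (deriv g) a (Pi.single ν l) (Pi.single k 1) p
            + (a:ℂ) * Gm g (a-1) (Pi.single ν l) (Pi.single k 1) p))
      = (p.2 m * (starRingEnd ℂ) (p.2 m))
          * ((a:ℂ) * (2*I) * Gm (deriv g) (a-1) (Pi.single ν l) (Pi.single k 1) p
            + (a:ℂ) * ((a:ℂ)-1) * Gm g (a-1-1) (Pi.single ν l) (Pi.single k 1) p)
        + (((Pi.single ν l : Fin n → ℕ) m : ℕ) : ℂ)
            * ((a:ℂ) * Gm g (a-1) (Pi.single ν l) (Pi.single k 1) p)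
        + (a:ℂ) * Gm g (a-1) (Pi.single ν l) (Pi.single k 1) p
        + (if m = k then (2*I*Gm (deriv g) a (Pi.single ν l) (Pi.single k 1) p
            + (a:ℂ) * Gm g (a-1) (Pi.single ν l) (Pi.single k 1) p) else 0) := by
    intro m
    by_cases hm : m = k <;> simp [hm] <;> ring
  rw [Finset.sum_congr (rfl : M = M) (fun m _ => hsplit1 m)]
  have hsplit2 : ∀ m : Fin n,
      (2*I*((a:ℂ) * (p.2 m * (starRingEnd ℂ) (p.2 m))
            * Gm (deriv g) (a-1) (Pi.single ν l) (Pi.single k 1) p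
          + Gm (deriv g) a (Pi.single ν l) (Pi.single k 1) p)
        + (a:ℂ)*(((a:ℂ)-1) * (p.2 m * (starRingEnd ℂ) (p.2 m))
            * Gm g (a-1-1) (Pi.single ν l) (Pi.single k 1) p
          + Gm g (a-1) (Pi.single ν l) (Pi.single k 1) p))
      = (p.2 m * (starRingEnd ℂ) (p.2 m))
          * ((a:ℂ) * (2*I) * Gm (deriv g) (a-1) (Pi.single ν l) (Pi.single k 1) p
            + (a:ℂ) * ((a:ℂ)-1) * Gm g (a-1-1) (Pi.single ν l) (Pi.single k 1) p)
        + (2*I*Gm (deriv g) a (Pi.single ν l) (Pi.single k 1) p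
            + (a:ℂ) * Gm g (a-1) (Pi.single ν l) (Pi.single k 1) p) := by
    intro m
    ring
  rw [Finset.sum_congr (rfl : J' = J') (fun m _ => hsplit2 m)]
  rw [Finset.sum_add_distrib, Finset.sum_add_distrib, Finset.sum_add_distrib,
    Finset.sum_add_distrib, ← Finset.sum_mul, ← Finset.sum_mul, ← Finset.sum_mul,
    Finset.sum_const, Finset.sum_const, Finset.sum_ite_eq' M k, if_pos hkM,
    hJcard, hMcard]
  -- the single sum
  have hsing : (∑ m ∈ M, ((((Pi.single ν l : Fin n → ℕ) m : ℕ)) : ℂ)) = (l : ℂ) := by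
    have : ∀ m : Fin n, ((((Pi.single ν l : Fin n → ℕ) m : ℕ)) : ℂ)
        = if m = ν then (l : ℂ) else 0 := fun m => by
      by_cases hm : m = ν <;> simp [hm, Pi.single_apply]
    rw [Finset.sum_congr rfl (fun m _ => this m), Finset.sum_ite_eq' M ν, if_pos hνM]
  rw [hsing]
  -- sums of σ
  have hσ : (∑ m ∈ J', p.2 m * (starRingEnd ℂ) (p.2 m))
      + (∑ m ∈ M, p.2 m * (starRingEnd ℂ) (p.2 m)) = Sc p := by
    rw [hJ', hM]
    exact Finset.sum_filter_add_sum_filter_not Finset.univ _ _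
  have hSJ : (∑ m ∈ J', p.2 m * (starRingEnd ℂ) (p.2 m))
      = Sc p - (∑ m ∈ M, p.2 m * (starRingEnd ℂ) (p.2 m)) := by
    linear_combination hσ
  rw [← Finset.sum_mul, hSJ]
  -- zpow ladder relations
  have r1 : Sc p * Gm (deriv g) (a-1) (Pi.single ν l) (Pi.single k 1) p
      = Gm (deriv g) a (Pi.single ν l) (Pi.single k 1) p := Gm_succ _ _ _ _ hp
  have r2 : Sc p * Gm g (a-1-1) (Pi.single ν l) (Pi.single k 1) p
      = Gm g (a-1) (Pi.single ν l) (Pi.single k 1) p := Gm_succ _ _ _ _ hp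
  have r3 : Sc p * Gm g (a-1) (Pi.single ν l) (Pi.single k 1) p
      = Gm g a (Pi.single ν l) (Pi.single k 1) p := Gm_succ _ _ _ _ hp
  have hnq : ((n - q : ℕ) : ℂ) = (n : ℂ) - (q : ℂ) := by
    have h9 : q ≤ n := by omega
    push_cast [h9]
    ring
  have haC : ((a : ℤ) : ℂ) = -(q:ℂ) - 1 := by
    rw [haa]
    push_cast
    ring
  simp only [nsmul_eq_mul]
  rw [hnq, haC]
  have hdiv : ((q:ℂ)+1) * ((n:ℂ)+(l:ℂ)-(q:ℂ)-1) / Sc p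
        * Gm g a (Pi.single ν l) (Pi.single k 1) p
      = ((q:ℂ)+1) * ((n:ℂ)+(l:ℂ)-(q:ℂ)-1)
        * Gm g (a-1) (Pi.single ν l) (Pi.single k 1) p := by
    rw [← r3]
    field_simp
  rw [hdiv]
  linear_combination (-2*I*(-(q:ℂ)-1)) * r1 + (-((-(q:ℂ)-1))*(((-(q:ℂ)-1))-1)) * r2


end Tool

/-- Lemma 2.1 of the paper: `u_h = h(w)(z^n)^l s^{-(q+1)} ξ^J` is an eigenform of the Kohn
Laplacian with eigenvalue `(q+1)(n+l-q-1)/s`, computed componentwise via the Folland–Stein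
formula `□_b(f_{\bar I} d\bar z^I) = -Σ_{k∉I} L_k \bar L_k f_{\bar I} - Σ_{k∈I} \bar L_k L_k f_{\bar I}`.
Here the component of `u_h` along `d\bar z^{J∖k}` (with `J = {1,…,q+1}`, `0`-indexed as
`{0,…,q}`) is `f = (-1)^k h(w) (z^n)^l s^{-(q+1)} \bar z^k`. -/
theorem box_b_eigenform
    (n : ℕ) (hn : 3 ≤ n) (q : ℕ) (hq1 : 1 ≤ q) (hq2 : q + 2 ≤ n)
    (l : ℕ) (hl : 2 * (q + 1) + 1 ≤ l)
    (h : ℂ → ℂ) (hh : Differentiable ℂ h)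
    (k : Fin n) (hk : (k : ℕ) < q + 1)
    (p : Heis n) (hp : 0 < sF p) :
    (- ∑ m ∈ Finset.univ.filter (fun m : Fin n => ¬ ((m : ℕ) < q + 1 ∧ m ≠ k)),
        Lop m (Lbar m (fun x =>
          (-1 : ℂ) ^ (k : ℕ) * h (wF x) * (x.2 ⟨n - 1, by omega⟩) ^ l
            * ((sF x : ℂ)) ^ (-(q : ℤ) - 1) * (starRingEnd ℂ) (x.2 k))) p)
      - ∑ m ∈ Finset.univ.filter (fun m : Fin n => (m : ℕ) < q + 1 ∧ m ≠ k),
        Lbar m (Lop m (fun x =>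
          (-1 : ℂ) ^ (k : ℕ) * h (wF x) * (x.2 ⟨n - 1, by omega⟩) ^ l
            * ((sF x : ℂ)) ^ (-(q : ℤ) - 1) * (starRingEnd ℂ) (x.2 k))) p
      = (((q : ℂ) + 1) * ((n : ℂ) + (l : ℂ) - (q : ℂ) - 1) / (sF p : ℂ))
        * ((-1 : ℂ) ^ (k : ℕ) * h (wF p) * (p.2 ⟨n - 1, by omega⟩) ^ l
            * ((sF p : ℂ)) ^ (-(q : ℤ) - 1) * (starRingEnd ℂ) (p.2 k)) := by
  classical
  set ν : Fin n := ⟨n - 1, by omega⟩ with hν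
  have hg : Differentiable ℂ (fun z : ℂ => (-1 : ℂ) ^ (k : ℕ) * h z) := hh.const_mul _
  have hg' : Differentiable ℂ (deriv (fun z : ℂ => (-1 : ℂ) ^ (k : ℕ) * h z)) := by
    have h1 : AnalyticOnNhd ℂ (fun z : ℂ => (-1 : ℂ) ^ (k : ℕ) * h z) Set.univ :=
      hg.differentiableOn.analyticOnNhd isOpen_univ
    exact fun z => ((h1.deriv) z (Set.mem_univ z)).differentiableAt
  have hp' : Tool.Sc p ≠ 0 := by
    rw [Tool.Sc_eq]
    exact_mod_cast Complex.ofReal_ne_zero.mpr (ne_of_gt hp)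
  have hmain := Tool.main n q l hq2 hg hg' k hk ν rfl p hp'
  have hF : (fun x : Heis n =>
      (-1 : ℂ) ^ (k : ℕ) * h (wF x) * (x.2 ⟨n - 1, by omega⟩) ^ l
        * ((sF x : ℂ)) ^ (-(q : ℤ) - 1) * (starRingEnd ℂ) (x.2 k))
      = Tool.Gm (fun z : ℂ => (-1 : ℂ) ^ (k : ℕ) * h z) (-(q:ℤ)-1)
          (Pi.single ν l) (Pi.single k 1) := by
    funext x
    simp only [Tool.Gm, Tool.Pz_single, Tool.Qz_single, pow_one]
    rw [Tool.Wc_eq, Tool.Sc_eq]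
    ring
  rw [Tool.Sc_eq p] at hmain
  rw [hF]
  rw [hmain]
  rw [← congrFun hF p]

end
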